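/- Let X be a real Banach space. Then X contains a linearly dense uniformly weakly null subset if and only if there exist a set I and an injective linear map T : X* → c₀(I) such that T is continuous from the weak* topology of X* to the topology of pointwise convergence on c₀(I), and for every ε > 0 there exists N ∈ ℕ such that for every x* in the closed unit ball B_{X*} of X*, the set {i ∈ I : |T(x*)(i)| > ε} has at most N elements (i.e., (B_{X*}, w*) is linearly uniformly Eberlein). -/

import Mathlib

open NormedSpace
open Topology

universe u

variable {X : Type u} [NormedAddCommGroup X] [NormedSpace ℝ X]

-- density lemma
theorem aux_dense (A : Set X)
    (h : ∀ f : X →L[ℝ] ℝ, (∀ a ∈ A, f a = 0) → f = 0) :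
    Dense (Submodule.span ℝ A : Set X) := by
  set p := (Submodule.span ℝ A).topologicalClosure with hp
  have hptop : p = ⊤ := by
    by_contra hne
    obtain ⟨x, hx⟩ : ∃ x, x ∉ p := by
      by_contra hc
      push_neg at hc
      exact hne (Submodule.eq_top_iff'.2 hc)
    obtain ⟨f, u, hf, hu⟩ := geometric_hahn_banach_closed_point
      (p.convex) (Submodule.isClosed_topologicalClosure _) hx
    have hfp : ∀ y ∈ p, f y = 0 := by
      intro y hy
      by_contra hfy
      have ht : ∀ t : ℝ, t * f y < u := by
        intro t
        have := hf (t • y) (p.smul_mem t hy)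
        simpa [map_smul] using this
      have := ht ((u + 1) / f y)
      rw [div_mul_cancel₀ _ hfy] at this
      linarith
    have hf0 : f = 0 := h f (fun a ha => hfp a
      (Submodule.le_topologicalClosure _ (Submodule.subset_span ha)))
    have h0 : (0:ℝ) < u := by simpa using hf (0 : X) p.zero_mem
    rw [hf0] at hu
    simp at hu
    linarith
  rw [dense_iff_closure_eq, ← Submodule.topologicalClosure_coe, ← hp, hptop]
  simp

-- weak* continuous functional is evaluation
theorem aux_eval (φ : StrongDual ℝ X →ₗ[ℝ] ℝ)
    (hφ : Continuous fun g : WeakDual ℝ X => φ (WeakDual.toStrongDual g)) :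
    ∃ x : X, ∀ g : StrongDual ℝ X, φ g = g x := by
  have h0 : (fun g : WeakDual ℝ X => φ (WeakDual.toStrongDual g)) ⁻¹' (Metric.ball 0 1)
      ∈ 𝓝 (0 : WeakDual ℝ X) := by
    apply hφ.continuousAt.preimage_mem_nhds
    simp [Metric.ball_mem_nhds]
  rw [show 𝓝 (0 : WeakDual ℝ X) = Filter.comap (fun (g : WeakDual ℝ X) (x : X) => g x) (𝓝 ((fun (g : WeakDual ℝ X) (x : X) => g x) 0)) from nhds_induced _ _] at h0
  obtain ⟨V, hV, hVsub⟩ := Filter.mem_comap.1 h0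
  rw [nhds_pi, Filter.mem_pi] at hV
  obtain ⟨I, hIfin, W, hW, hWsub⟩ := hV
  haveI : Finite ↥I := hIfin
  set L : ↥I → (StrongDual ℝ X →ₗ[ℝ] ℝ) := fun i =>
    { toFun := fun g => g (i : X), map_add' := by intros; rfl, map_smul' := by intros; rfl }
  have hker : ⨅ i, LinearMap.ker (L i) ≤ LinearMap.ker φ := by
    intro g hg
    simp only [Submodule.mem_iInf, LinearMap.mem_ker] at hg ⊢
    by_contra hne
    obtain ⟨n, hn⟩ := exists_nat_gt (1 / |φ g|)
    have hgn : ((n : ℝ) + 1) • g ∈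
        (fun g : WeakDual ℝ X => φ (WeakDual.toStrongDual g)) ⁻¹' (Metric.ball 0 1) := by
      apply hVsub
      apply hWsub
      intro x hx
      have hz : g x = 0 := hg ⟨x, hx⟩
      show (((n : ℝ) + 1) • g) x ∈ W x
      simp only [ContinuousLinearMap.coe_smul', Pi.smul_apply, hz, smul_zero]
      exact mem_of_mem_nhds (hW x)
    change dist (φ (WeakDual.toStrongDual (((n : ℝ) + 1) • g))) 0 < 1 at hgn
    rw [dist_zero_right, Real.norm_eq_abs] at hgn
    have hgn' : |φ (((n : ℝ) + 1) • g)| < 1 := hgn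
    have h1 : |φ (((n : ℝ) + 1) • g)| = ((n : ℝ) + 1) * |φ g| := by
      rw [map_smul]
      simp [abs_mul, abs_of_nonneg (by positivity : (0:ℝ) ≤ (n:ℝ)+1)]
    rw [h1] at hgn'
    have habs : 0 < |φ g| := abs_pos.2 hne
    have : 1 / |φ g| < (n : ℝ) + 1 := by linarith
    rw [div_lt_iff₀ habs] at this
    nlinarith [hgn']
  have hmem := mem_span_of_iInf_ker_le_ker hker
  haveI : Fintype ↥I := hIfin.fintype
  obtain ⟨c, hc⟩ := (Submodule.mem_span_range_iff_exists_fun ℝ).1 hmem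
  refine ⟨∑ i, c i • (i : X), fun g => ?_⟩
  rw [← hc]
  simp [L, map_sum, map_smul, mul_comm]


/-- A real Banach space `X` contains a linearly dense uniformly weakly null subset
if and only if `(B_{X*}, w*)` is linearly uniformly Eberlein: there are a set `I` and an
injective linear map `T : X* → c₀(I)`, continuous from the weak* topology to the topology of
pointwise convergence, such that for every `ε > 0` there is `N ∈ ℕ` with
`|{i : |T(x*)(i)| > ε}| ≤ N` for every `x*` in the closed unit ball of `X*`. -/
theorem statement17 {X : Type u} [NormedAddCommGroup X] [NormedSpace ℝ X] [CompleteSpace X] :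
    (∃ A : Set X, Dense (Submodule.span ℝ A : Set X) ∧
      ∀ ε : ℝ, 0 < ε → ∃ N : ℕ, ∀ f : X →L[ℝ] ℝ, ‖f‖ ≤ 1 →
        {x ∈ A | ε < |f x|}.encard ≤ (N : ℕ∞)) ↔
    (∃ (I : Type u) (T : StrongDual ℝ X →ₗ[ℝ] (I → ℝ)),
      Function.Injective T ∧
      (∀ g : StrongDual ℝ X, ∀ ε : ℝ, 0 < ε → {i : I | ε ≤ |T g i|}.Finite) ∧
      Continuous (fun g : WeakDual ℝ X => T (WeakDual.toStrongDual g)) ∧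
      (∀ ε : ℝ, 0 < ε → ∃ N : ℕ, ∀ g : StrongDual ℝ X, ‖g‖ ≤ 1 →
        {i : I | ε < |T g i|}.encard ≤ (N : ℕ∞))) := by
  constructor
  · rintro ⟨A, hA, hN⟩
    let T0 : StrongDual ℝ X →ₗ[ℝ] (↥A → ℝ) :=
      { toFun := fun g a => g (a : X),
        map_add' := by intros; rfl, map_smul' := by intros; rfl }
    refine ⟨↥A, T0, ?_, ?_, ?_, ?_⟩
    · intro g g' hgg'
      have heq : Set.EqOn g g' A := fun a ha => congrFun hgg' ⟨a, ha⟩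
      have heq2 : Set.EqOn g g' (Submodule.span ℝ A : Set X) :=
        LinearMap.eqOn_span' heq
      have hgg := Continuous.ext_on hA g.continuous g'.continuous heq2
      ext x
      exact congrFun hgg x
    · intro g ε hε
      set c : ℝ := ‖g‖ + 1 with hc
      have hc0 : (0:ℝ) < c := by positivity
      obtain ⟨N, hNs⟩ := hN (ε / (2 * c)) (by positivity)
      have hnorm : ‖c⁻¹ • g‖ ≤ 1 := by
        rw [norm_smul, norm_inv, Real.norm_eq_abs, abs_of_pos hc0]
        rw [inv_mul_le_iff₀ hc0]
        simp [hc]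
      have hfin : {x ∈ A | ε / (2 * c) < |(c⁻¹ • g) x|}.Finite := by
        apply Set.finite_of_encard_le_coe (hNs _ hnorm)
      have hsub : {a : ↥A | ε ≤ |g (a : X)|} ⊆
          Subtype.val ⁻¹' {x ∈ A | ε / (2 * c) < |(c⁻¹ • g) x|} := by
        rintro ⟨a, ha⟩ hga
        simp only [Set.mem_setOf_eq] at hga
        refine ⟨ha, ?_⟩
        simp only [ContinuousLinearMap.coe_smul', Pi.smul_apply, smul_eq_mul, abs_mul,
          abs_inv, abs_of_pos hc0]
        rw [div_lt_iff₀ (by positivity), inv_mul_eq_div, div_mul_eq_mul_div,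
          lt_div_iff₀ hc0]
        nlinarith [abs_nonneg (g (a : X))]
      exact ((hfin.preimage (Subtype.val_injective.injOn)).subset hsub)
    · exact continuous_pi fun a => WeakDual.eval_continuous (a : X)
    · intro ε hε
      obtain ⟨N, hNs⟩ := hN ε hε
      refine ⟨N, fun g hg => ?_⟩
      have him : Subtype.val '' {i : ↥A | ε < |g (i : X)|} ⊆ {x ∈ A | ε < |g x|} := by
        rintro x ⟨⟨a, ha⟩, hmem, rfl⟩
        exact ⟨ha, hmem⟩
      calc {i : ↥A | ε < |g (i : X)|}.encard
          = (Subtype.val '' {i : ↥A | ε < |g (i : X)|}).encard :=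
            (Set.InjOn.encard_image (Subtype.val_injective.injOn)).symm
        _ ≤ {x ∈ A | ε < |g x|}.encard := Set.encard_mono him
        _ ≤ (N : ℕ∞) := hNs g hg
  · rintro ⟨I, T, hinj, hfin, hcont, hN⟩
    have hev : ∀ i : I, ∃ x : X, ∀ g : StrongDual ℝ X, T g i = g x := by
      intro i
      apply aux_eval ((LinearMap.proj i).comp T)
      exact (continuous_apply i).comp hcont
    choose xi hxi using hev
    refine ⟨Set.range xi, ?_, ?_⟩
    · apply aux_dense
      intro f hf
      apply hinj
      rw [map_zero]
      funext i
      rw [hxi i f]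
      exact hf (xi i) ⟨i, rfl⟩
    · intro ε hε
      obtain ⟨N, hNs⟩ := hN ε hε
      refine ⟨N, fun f hfle => ?_⟩
      have hsub : {x ∈ Set.range xi | ε < |f x|} ⊆ xi '' {i : I | ε < |T f i|} := by
        rintro x ⟨⟨i, rfl⟩, hx⟩
        exact ⟨i, by rwa [Set.mem_setOf_eq, hxi i f], rfl⟩
      calc {x ∈ Set.range xi | ε < |f x|}.encard
          ≤ (xi '' {i : I | ε < |T f i|}).encard := Set.encard_mono hsub
        _ ≤ {i : I | ε < |T f i|}.encard := Set.encard_image_le _ _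
        _ ≤ (N : ℕ∞) := hNs f hfle
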